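/- Let G be a finite group and φ a coprime automorphism of G. Let {N_i : i ∈ I} be a family of normal φ-invariant subgroups of G and N = ∏_i N_i their product. Then N_φ = ∏_i (N_i)_φ, i.e., the fixed points of φ in N are the product of the fixed points in the N_i. -/

import Mathlib

/-- The fixed-point subgroup of an automorphism. -/
def fixedSubgroup {G : Type*} [Group G] (φ : G ≃* G) : Subgroup G where
  carrier := {x | φ x = x}
  one_mem' := map_one φ
  mul_mem' := by
    intro a b ha hb
    simp only [Set.mem_setOf_eq, map_mul] at *
    rw [ha, hb]
  inv_mem' := by
    intro a ha
    simp only [Set.mem_setOf_eq, map_inv] at *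
    rw [ha]

lemma mem_fixedSubgroup_iff {G : Type*} [Group G] (φ : G ≃* G) (x : G) :
    x ∈ fixedSubgroup φ ↔ φ x = x := Iff.rfl

universe u

theorem key_fixed (n : ℕ) (hn : 0 < n) (N : Type u) [Group N] [Finite N]
    (hcop : (Nat.card N).Coprime n) (ψ : MulAut N) (hψn : ψ ^ n = 1)
    (a x₀ : N) (hx₀ : (fun x => a * ψ x)^[n] x₀ = x₀) :
    ∃ b : N, a * ψ b = b := by
  have hpow : ∀ (k : ℕ) (x : N), (ψ ^ (k + 1)) x = ψ ((ψ ^ k) x) := by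
    intro k x; rw [pow_succ']; rfl
  set F : N → N := fun x => a * ψ x with hF
  have hcompat : ∀ (k : ℕ) (x g : N), F^[k] (x * g) = F^[k] x * (ψ ^ k) g := by
    intro k
    induction k with
    | zero => intro x g; simp
    | succ k ih =>
      intro x g
      rw [Function.iterate_succ_apply', Function.iterate_succ_apply', ih]
      show a * ψ (F^[k] x * (ψ ^ k) g) = (a * ψ (F^[k] x)) * (ψ ^ (k+1)) g
      rw [map_mul, hpow, mul_assoc]
  have hFn : ∀ x, F^[n] x = x := by
    intro x
    have h1 : F^[n] (x₀ * (x₀⁻¹ * x)) = F^[n] x₀ * (ψ ^ n) (x₀⁻¹ * x) := hcompat n _ _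
    rw [hψn, hx₀, mul_inv_cancel_left] at h1
    simpa using h1
  by_cases hn1 : n = 1
  · subst hn1
    exact ⟨x₀, hx₀⟩
  -- now n > 1
  set p := n.minFac with hpdef
  have hp : p.Prime := Nat.minFac_prime hn1
  set m := n / p with hmdef
  have hmp : m * p = n := Nat.div_mul_cancel n.minFac_dvd
  have hm0 : 0 < m := Nat.div_pos (Nat.minFac_le hn) hp.pos
  have hmlt : m < n := Nat.div_lt_self hn hp.one_lt
  set h : N → N := F^[m] with hh
  have hhp : ∀ x, h^[p] x = x := by
    intro x
    rw [hh, ← Function.iterate_mul, hmp]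
    exact hFn x
  have hpc : ¬ p ∣ Nat.card N := by
    intro hdvd
    have h1 : p ∣ Nat.gcd (Nat.card N) n := Nat.dvd_gcd hdvd n.minFac_dvd
    rw [Nat.Coprime] at hcop
    rw [hcop] at h1
    exact hp.one_lt.ne' (Nat.dvd_one.mp h1)
  -- find a fixed point of h = F^[m]
  have hx₁ : ∃ x, h x = x := by
    haveI : Fact p.Prime := ⟨hp⟩
    haveI : NeZero p := ⟨hp.pos.ne'⟩
    have hq : ∀ (q : ℕ) (x : N), (h^[p])^[q] x = x := by
      intro q
      induction q with
      | zero => intro x; rfl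
      | succ q ih => intro x; rw [Function.iterate_succ_apply, hhp]; exact ih x
    have hred : ∀ (i : ℕ) (x : N), h^[i] x = h^[i % p] x := by
      intro i x
      conv_lhs => rw [← Nat.mod_add_div i p]
      rw [Function.iterate_add_apply, Function.iterate_mul, hq]
    letI act : MulAction (Multiplicative (ZMod p)) N :=
      { smul := fun g x => h^[(Multiplicative.toAdd g).val] x
        one_smul := by
          intro x
          show h^[(Multiplicative.toAdd (1 : Multiplicative (ZMod p))).val] x = x
          simp [ZMod.val_zero]
        mul_smul := by
          intro g₁ g₂ x
          show h^[(Multiplicative.toAdd (g₁ * g₂)).val] x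
              = h^[(Multiplicative.toAdd g₁).val] (h^[(Multiplicative.toAdd g₂).val] x)
          rw [← Function.iterate_add_apply, hred,
            hred ((Multiplicative.toAdd g₁).val + (Multiplicative.toAdd g₂).val)]
          congr 1
          show ((Multiplicative.toAdd g₁ + Multiplicative.toAdd g₂).val) % p = _
          rw [ZMod.val_add]
          simp [Nat.mod_mod_of_dvd] }
    have hPG : IsPGroup p (Multiplicative (ZMod p)) := by
      apply IsPGroup.of_card (n := 1)
      simp [Nat.card_eq_fintype_card, ZMod.card]
    have hmodeq := hPG.card_modEq_card_fixedPoints N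
    have hne : Nat.card (MulAction.fixedPoints (Multiplicative (ZMod p)) N) ≠ 0 := by
      intro h0
      rw [h0] at hmodeq
      exact hpc ((Nat.modEq_zero_iff_dvd).mp hmodeq)
    obtain ⟨⟨x, hx⟩⟩ := (Nat.card_ne_zero.mp hne).1
    refine ⟨x, ?_⟩
    have h2 : h^[(1 : ZMod p).val] x = x := hx (Multiplicative.ofAdd (1 : ZMod p))
    haveI : Fact (1 < p) := ⟨hp.one_lt⟩
    rw [ZMod.val_one] at h2
    simpa using h2
  obtain ⟨x₁, hx₁0⟩ := hx₁
  have hx₁ : F^[m] x₁ = x₁ := hx₁0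
  -- the fixed subgroup of ψ^m
  set C : Subgroup N := fixedSubgroup ((ψ ^ m : MulAut N) : N ≃* N) with hC
  have hmemC : ∀ c : N, c ∈ C ↔ (ψ ^ m) c = c := fun c => Iff.rfl
  have hΩC : ∀ u v : N, F^[m] u = u → F^[m] v = v → (ψ ^ m) (u⁻¹ * v) = u⁻¹ * v := by
    intro u v hu hv
    have h1 := hcompat m u (u⁻¹ * v)
    rw [mul_inv_cancel_left, hu, hv] at h1
    have h2 : u * (ψ ^ m) (u⁻¹ * v) = u * (u⁻¹ * v) := by
      rw [← h1, mul_inv_cancel_left]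
    exact mul_left_cancel h2
  have hFx₁' : F^[m] (F x₁) = F x₁ := by
    rw [← Function.iterate_succ_apply, Function.iterate_succ_apply', hx₁]
  -- ψ and ψ⁻¹ preserve C
  have hψC : ∀ c : N, c ∈ C → ψ c ∈ C := by
    intro c hc
    rw [hmemC] at hc ⊢
    calc (ψ ^ m) (ψ c) = (ψ ^ (m + 1)) c := by rw [pow_succ]; rfl
      _ = ψ ((ψ ^ m) c) := by rw [pow_succ']; rfl
      _ = ψ c := by rw [hc]
  have hψCinv : ∀ c : N, c ∈ C → ψ⁻¹ c ∈ C := by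
    intro c hc
    rw [hmemC] at hc ⊢
    have h2 : ψ ((ψ ^ m) (ψ⁻¹ c)) = c := by
      calc ψ ((ψ ^ m) (ψ⁻¹ c)) = (ψ ^ (m + 1)) (ψ⁻¹ c) := by rw [pow_succ']; rfl
        _ = (ψ ^ m) (ψ (ψ⁻¹ c)) := by rw [pow_succ]; rfl
        _ = (ψ ^ m) c := by rw [MulAut.apply_inv_self]
        _ = c := hc
    have := congrArg (fun y => ψ⁻¹ y) h2
    simpa using this
  set ψ' : MulAut ↥C :=
    { toFun := fun c => ⟨ψ c, hψC c c.2⟩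
      invFun := fun c => ⟨ψ⁻¹ c, hψCinv c c.2⟩
      left_inv := fun c => Subtype.ext (by simp)
      right_inv := fun c => Subtype.ext (by simp)
      map_mul' := fun c d => Subtype.ext (by simp) } with hψ'def
  have hψ'coe : ∀ c : ↥C, (ψ' c : N) = ψ (c : N) := fun c => rfl
  have hψ'pow : ∀ (k : ℕ) (c : ↥C), (((ψ' ^ k) c : ↥C) : N) = (ψ ^ k) (c : N) := by
    intro k
    induction k with
    | zero => intro c; simp
    | succ k ih =>
      intro c
      have e1 : (ψ' ^ (k+1)) c = ψ' ((ψ' ^ k) c) := by rw [pow_succ']; rfl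
      rw [e1, hψ'coe, ih, ← hpow]
  have hψ'm : ψ' ^ m = 1 := by
    refine MulEquiv.ext fun c => Subtype.ext ?_
    rw [hψ'pow m c]
    exact c.2
  set a' : ↥C := ⟨x₁⁻¹ * F x₁, hΩC x₁ (F x₁) hx₁ hFx₁'⟩ with ha'
  set F' : ↥C → ↥C := fun y => a' * ψ' y with hF'
  have hlift : ∀ (k : ℕ) (y : ↥C), F^[k] (x₁ * (y : N)) = x₁ * ((F'^[k] y : ↥C) : N) := by
    intro k
    induction k with
    | zero => intro y; rfl
    | succ k ih =>
      intro y
      rw [Function.iterate_succ_apply', Function.iterate_succ_apply', ih]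
      show a * ψ (x₁ * ((F'^[k] y : ↥C) : N)) = x₁ * ((a' * ψ' (F'^[k] y) : ↥C) : N)
      rw [Subgroup.coe_mul, hψ'coe, ha']
      show a * ψ (x₁ * ((F'^[k] y : ↥C) : N)) = x₁ * ((x₁⁻¹ * F x₁) * ψ ((F'^[k] y : ↥C) : N))
      rw [map_mul]
      simp [hF, mul_assoc]
  have hF'm : F'^[m] (1 : ↥C) = 1 := by
    have := hlift m 1
    rw [OneMemClass.coe_one, mul_one, hx₁] at this
    have h2 : x₁ * ((1 : ↥C) : N) = x₁ * ((F'^[m] (1:↥C) : ↥C) : N) := by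
      rw [OneMemClass.coe_one, mul_one]; exact this
    exact (Subtype.ext (mul_left_cancel h2)).symm
  have hcard : Nat.card ↥C ∣ Nat.card N := Subgroup.card_subgroup_dvd_card C
  have hmn : m ∣ n := ⟨p, hmp.symm⟩
  have hcop' : (Nat.card ↥C).Coprime m :=
    Nat.Coprime.coprime_dvd_left hcard (Nat.Coprime.coprime_dvd_right hmn hcop)
  obtain ⟨b', hb'⟩ := key_fixed m hm0 ↥C hcop' ψ' hψ'm a' 1 hF'm
  refine ⟨x₁ * (b' : N), ?_⟩
  have := hlift 1 b'
  rw [Function.iterate_one, Function.iterate_one] at this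
  rw [show F' b' = b' from hb'] at this
  exact this
termination_by n
decreasing_by exact hmlt

section Pair
open scoped Pointwise

variable {G : Type u} [Group G] [Finite G]

lemma finite_mulAut : Finite (MulAut G) :=
  Finite.of_injective (fun e => (e : G → G)) (fun e1 e2 h => by
    ext x; exact congrFun h x)

/-- restriction of an automorphism to an invariant subgroup of a finite group -/
noncomputable def autRestrict (φ : MulAut G) (H : Subgroup G) (h : ∀ x ∈ H, φ x ∈ H) :
    MulAut ↥H := by
  have hsurj : Function.Surjective (fun x : ↥H => (⟨φ x, h x x.2⟩ : ↥H)) := by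
    apply Finite.surjective_of_injective
    intro x y hxy
    apply Subtype.ext
    exact φ.injective (congrArg Subtype.val hxy)
  exact
  { toFun := fun x => ⟨φ x, h x x.2⟩
    invFun := fun x => (hsurj x).choose
    left_inv := fun x => by
      have := (hsurj ⟨φ x, h x x.2⟩).choose_spec
      apply Subtype.ext
      exact φ.injective (congrArg Subtype.val this)
    right_inv := fun x => (hsurj x).choose_spec
    map_mul' := fun x y => Subtype.ext (by simp) }

lemma autRestrict_coe (φ : MulAut G) (H : Subgroup G) (h : ∀ x ∈ H, φ x ∈ H) (x : ↥H) :
    ((autRestrict φ H h) x : G) = φ (x : G) := rfl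

lemma autRestrict_pow_coe (φ : MulAut G) (H : Subgroup G) (h : ∀ x ∈ H, φ x ∈ H) (k : ℕ)
    (x : ↥H) : (((autRestrict φ H h) ^ k) x : G) = (φ ^ k) (x : G) := by
  induction k with
  | zero => simp
  | succ k ih =>
    have e1 : ((autRestrict φ H h) ^ (k+1)) x = (autRestrict φ H h) (((autRestrict φ H h) ^ k) x) := by
      rw [pow_succ']; rfl
    have e2 : ∀ y : G, (φ ^ (k+1)) y = φ ((φ ^ k) y) := fun y => by rw [pow_succ']; rfl
    rw [e1, autRestrict_coe, ih, e2]

lemma pair_lemma (φ : MulAut G) (hcop : (Nat.card G).Coprime (orderOf φ))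
    (M K : Subgroup G) (hMn : M.Normal) (hKn : K.Normal)
    (hMinv : ∀ x ∈ M, φ x ∈ M) (hKinv : ∀ x ∈ K, φ x ∈ K) :
    (M ⊔ K) ⊓ fixedSubgroup (φ : G ≃* G) ≤
      (M ⊓ fixedSubgroup (φ : G ≃* G)) ⊔ (K ⊓ fixedSubgroup (φ : G ≃* G)) := by
  intro x hx
  obtain ⟨hxMK, hxS⟩ := Subgroup.mem_inf.mp hx
  rw [mem_fixedSubgroup_iff] at hxS
  haveI := hKn
  have hxMK' : x ∈ ((M : Set G) * (K : Set G)) := by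
    rw [← Subgroup.mul_normal]; exact_mod_cast hxMK
  obtain ⟨m, hm, k, hk, hmk⟩ := hxMK'
  have hmk : m * k = x := hmk
  haveI : Finite (MulAut G) := finite_mulAut
  set n := orderOf φ with hn
  have npos : 0 < n := orderOf_pos φ
  have hφn : φ ^ n = 1 := pow_orderOf_eq_one φ
  set D := M ⊓ K with hD
  have hDinv : ∀ y ∈ D, φ y ∈ D := by
    intro y hy
    obtain ⟨h1, h2⟩ := Subgroup.mem_inf.mp hy
    exact Subgroup.mem_inf.mpr ⟨hMinv y h1, hKinv y h2⟩
  set ψ := autRestrict φ D hDinv with hψ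
  have hψn : ψ ^ n = 1 := by
    refine MulEquiv.ext fun d => Subtype.ext ?_
    rw [autRestrict_pow_coe, hφn]
    rfl
  have e1 : φ m * φ k = m * k := by rw [← map_mul, hmk, hxS]
  have e2 : m⁻¹ * φ m = k * (φ k)⁻¹ :=
    mul_left_cancel (a := m) (by
      rw [mul_inv_cancel_left, ← mul_assoc]
      exact eq_mul_inv_iff_mul_eq.mpr e1)
  have haD : m⁻¹ * φ m ∈ D :=
    Subgroup.mem_inf.mpr ⟨mul_mem (inv_mem hm) (hMinv m hm),
      e2 ▸ mul_mem hk (inv_mem (hKinv k hk))⟩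
  set a : ↥D := ⟨m⁻¹ * φ m, haD⟩ with ha
  have hiter : ∀ j : ℕ, (((fun y : ↥D => a * ψ y)^[j] 1 : ↥D) : G) = m⁻¹ * (φ ^ j) m := by
    intro j
    induction j with
    | zero => simp
    | succ j ih =>
      rw [Function.iterate_succ_apply']
      show ((a : G) * (ψ ((fun y : ↥D => a * ψ y)^[j] 1) : G)) = m⁻¹ * (φ ^ (j+1)) m
      rw [autRestrict_coe, ih, ha]
      have e3 : (φ ^ (j+1)) m = φ ((φ ^ j) m) := by rw [pow_succ']; rfl
      show (m⁻¹ * φ m) * φ (m⁻¹ * (φ ^ j) m) = m⁻¹ * (φ ^ (j+1)) m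
      rw [map_mul, map_inv, e3]
      simp [mul_assoc]
  have hx₀ : (fun y : ↥D => a * ψ y)^[n] 1 = 1 := by
    apply Subtype.ext
    rw [hiter n, hφn]
    simp
  have hcopD : (Nat.card ↥D).Coprime n :=
    Nat.Coprime.coprime_dvd_left (Subgroup.card_subgroup_dvd_card D) hcop
  obtain ⟨b, hb⟩ := key_fixed n npos ↥D hcopD ψ hψn a 1 hx₀
  have hbco : (m⁻¹ * φ m) * φ (b : G) = (b : G) := by
    have := congrArg (Subtype.val) hb
    rw [Subgroup.coe_mul, autRestrict_coe] at this
    exact this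
  have hbK : (b : G) ∈ K := (Subgroup.mem_inf.mp b.2).2
  have hbM : (b : G) ∈ M := (Subgroup.mem_inf.mp b.2).1
  set m₀ := m * (b : G) with hm₀
  have hm₀S : φ m₀ = m₀ := by
    rw [hm₀, map_mul]
    rw [mul_assoc] at hbco
    have h4 : φ m * φ (b : G) = m * (m⁻¹ * (φ m * φ (b:G))) := by rw [mul_inv_cancel_left]
    rw [h4, hbco]
  have hm₀M : m₀ ∈ M := mul_mem hm hbM
  have hrK : m₀⁻¹ * x ∈ K := by
    have h5 : m₀⁻¹ * x = (b : G)⁻¹ * k := by rw [← hmk, hm₀]; group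
    rw [h5]
    exact mul_mem (inv_mem hbK) hk
  have hrS : φ (m₀⁻¹ * x) = m₀⁻¹ * x := by rw [map_mul, map_inv, hm₀S, hxS]
  have hxeq : x = m₀ * (m₀⁻¹ * x) := by group
  rw [hxeq]
  exact mul_mem
    (Subgroup.mem_sup_left (Subgroup.mem_inf.mpr ⟨hm₀M, hm₀S⟩))
    (Subgroup.mem_sup_right (Subgroup.mem_inf.mpr ⟨hrK, hrS⟩))

end Pair

section Main

variable {G : Type*} [Group G]

lemma invar_iSup {ι : Sort*} (N : ι → Subgroup G) (f : G →* G)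
    (h : ∀ i, ∀ x ∈ N i, f x ∈ N i) : ∀ x ∈ ⨆ i, N i, f x ∈ ⨆ i, N i := by
  intro x hx
  refine Subgroup.iSup_induction N (C := fun y => f y ∈ ⨆ i, N i) hx (fun i y hy => ?_) ?_ ?_
  · exact Subgroup.mem_iSup_of_mem i (h i y hy)
  · show f 1 ∈ ⨆ i, N i
    rw [map_one]
    exact (⨆ i, N i).one_mem
  · intro y z hy hz
    rw [map_mul]
    exact mul_mem hy hz

lemma invar_biSup {I : Type*} (s : Finset I) (N : I → Subgroup G) (f : G →* G)
    (h : ∀ i, ∀ x ∈ N i, f x ∈ N i) :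
    ∀ x ∈ ⨆ i ∈ s, N i, f x ∈ ⨆ i ∈ s, N i := by
  rw [iSup_subtype']
  exact invar_iSup (fun i : {i // i ∈ s} => N i) f (fun i y hy => h i y hy)

lemma normal_biSup {I : Type*} (s : Finset I) (N : I → Subgroup G)
    (hnorm : ∀ i, (N i).Normal) : (⨆ i ∈ s, N i).Normal := by
  constructor
  intro x hx g
  have := invar_biSup s N (MulAut.conj g).toMonoidHom
    (fun i y hy => (hnorm i).conj_mem y hy g) x hx
  simpa using this

end Main

/-- For a coprime automorphism `φ` of a finite group `G` and a family of
normal `φ`-invariant subgroups `N i`, the fixed points of `φ` in the product `∏ N i`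
are the product of the fixed points in the `N i`. -/
theorem stmt_9 {G : Type*} [Group G] [Finite G] (φ : MulAut G)
    (hcop : (Nat.card G).Coprime (orderOf φ))
    {I : Type*} (N : I → Subgroup G)
    (hnorm : ∀ i, (N i).Normal)
    (hinv : ∀ i, ∀ x ∈ N i, φ x ∈ N i) :
    (⨆ i, N i) ⊓ fixedSubgroup (φ : G ≃* G) = ⨆ i, (N i ⊓ fixedSubgroup (φ : G ≃* G)) := by
  set S := fixedSubgroup (φ : G ≃* G) with hS
  apply le_antisymm
  · intro x hx
    obtain ⟨hxN, hxS⟩ := Subgroup.mem_inf.mp hx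
    classical
    set D : Finset I → Subgroup G := fun s => ⨆ i ∈ s, N i with hDdef
    have hDs : ∀ s, D s = ⨆ i ∈ s, N i := fun _ => rfl
    have hdir : Directed (· ≤ ·) D := by
      intro s t
      refine ⟨s ∪ t, ?_, ?_⟩ <;>
        · apply biSup_mono
          intro i hi
          simp [Finset.mem_union, hi]
    have hcover : (⨆ i, N i) = ⨆ s, D s := by
      apply le_antisymm
      · refine iSup_le fun i => le_iSup_of_le {i} ?_
        rw [hDs]
        simp
      · refine iSup_le fun s => ?_
        rw [hDs]
        exact iSup_le fun i => iSup_le fun _ => le_iSup N i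
    haveI : Nonempty (Finset I) := ⟨∅⟩
    rw [hcover] at hxN
    obtain ⟨s, hs⟩ := (Subgroup.mem_iSup_of_directed hdir).mp hxN
    have main : ∀ s : Finset I, (D s) ⊓ S ≤ ⨆ i, (N i ⊓ S) := by
      intro s
      induction s using Finset.induction_on with
      | empty =>
        rw [hDs]
        simp
      | insert j t hj ih =>
        have hDt_norm : (D t).Normal := normal_biSup t N hnorm
        have hDt_inv : ∀ x ∈ D t, φ x ∈ D t := fun x hx =>
          invar_biSup t N ((φ : G ≃* G).toMonoidHom) hinv x hx
        have hins : D (insert j t) = N j ⊔ D t := by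
          rw [hDs, hDs]
          exact Finset.iSup_insert j t N
        rw [hins]
        refine le_trans (pair_lemma φ hcop (N j) (D t) (hnorm j) hDt_norm (hinv j) hDt_inv) ?_
        exact sup_le (le_iSup (fun i => N i ⊓ S) j) ih
    exact main s (Subgroup.mem_inf.mpr ⟨hs, hxS⟩)
  · refine iSup_le fun i => le_inf (le_trans inf_le_left (le_iSup N i)) inf_le_right
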